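/- For every integer n ≥ 5 and every real number x with 1 < x < 17/10, h_n(x) > 0. -/
import Mathlib

noncomputable def h (n x : ℝ) : ℝ :=
  -512 + 256*(2*n-1)*x - 32*(38*n-75)*x^2
  + 192*(2*n-5)*(2*n-1)*x^3 - 6*(2*n-5)*(74*n-125)*x^4
  + 43*(2*n-5)^2*(2*n-1)*x^5 - (2*n-5)^2*(63*n-94)*x^6
  + 3*(2*n-5)^3*(2*n-1)*x^7 - (2*n-5)^3*(3*n-4)*x^8

lemma lq3 (x : ℝ) (hx1 : 1 < x) (hx2 : x < 17/10) :
    0 < 43 - 63/2*x + 12*x^2 - 7/2*x^3 := by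
  have hx0 : (0:ℝ) < x := by linarith
  nlinarith [mul_pos (sub_pos.2 hx1) (sub_pos.2 hx2), sq_nonneg (x-1), sq_nonneg (17/10-x),
    mul_pos (mul_pos (sub_pos.2 hx1) (sub_pos.2 hx2)) (sub_pos.2 hx2)]

lemma lS2 (x : ℝ) (hx1 : 1 < x) (hx2 : x < 17/10) :
    0 < 192*x^3 - 222*x^4 + 387*x^5 - 221*x^6 + 135*x^7 - 55*x^8 := by
  have hx0 : (0:ℝ) < x := by linarith
  nlinarith [mul_pos (sub_pos.2 hx1) (sub_pos.2 hx2), sq_nonneg (x-1), sq_nonneg (17/10-x),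
    mul_pos (mul_pos (sub_pos.2 hx1) (sub_pos.2 hx2)) (sub_pos.2 hx2), sq_nonneg (x^2-1),
    sq_nonneg (x^3-1), sq_nonneg (x^4-1), mul_pos (mul_pos hx0 hx0) hx0]

lemma lT (x : ℝ) (hx1 : 1 < x) (hx2 : x < 17/10) :
    0 < 256*x - 608*x^2 + 1728*x^3 - 1470*x^4 + 1935*x^5 - 1105*x^6 + 675*x^7 - 275*x^8 := by
  have hx0 : (0:ℝ) < x := by linarith
  nlinarith [mul_pos (sub_pos.2 hx1) (sub_pos.2 hx2), sq_nonneg (x-1), sq_nonneg (17/10-x),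
    mul_pos (mul_pos (sub_pos.2 hx1) (sub_pos.2 hx2)) (sub_pos.2 hx2), sq_nonneg (x^2-1),
    sq_nonneg (x^3-1), sq_nonneg (x^4-1), mul_pos (mul_pos hx0 hx0) hx0]

lemma lP (x : ℝ) (hx1 : 1 < x) (hx2 : x < 17/10) :
    0 < -512 + 2304*x - 3680*x^2 + 8640*x^3 - 7350*x^4 + 9675*x^5 - 5525*x^6 + 3375*x^7 - 1375*x^8 := by
  have hx0 : (0:ℝ) < x := by linarith
  nlinarith [mul_pos (sub_pos.2 hx1) (sub_pos.2 hx2), sq_nonneg (x-1), sq_nonneg (17/10-x),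
    mul_pos (mul_pos (sub_pos.2 hx1) (sub_pos.2 hx2)) (sub_pos.2 hx2), sq_nonneg (x^2-1),
    sq_nonneg (x^3-1), sq_nonneg (x^4-1), mul_pos (mul_pos hx0 hx0) hx0]


theorem stmt_5 (n : ℤ) (hn : 5 ≤ n) (x : ℝ) (hx1 : 1 < x) (hx2 : x < 17/10) :
    0 < h (n : ℝ) x := by
  have hx0 : (0:ℝ) < x := by linarith
  have hn' : (5:ℝ) ≤ (n:ℝ) := by exact_mod_cast hn
  have key : h (n:ℝ) x =
      (-512 + 1024*x - 640*x^2)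
      + (256*x - 608*x^2 + 768*x^3 - 360*x^4) * (2*(n:ℝ)-5)
      + (192*x^3 - 222*x^4 + 172*x^5 - 127/2*x^6) * (2*(n:ℝ)-5)^2
      + (43*x^5 - 63/2*x^6 + 12*x^7 - 7/2*x^8) * (2*(n:ℝ)-5)^3
      + (3*x^7 - 3/2*x^8) * (2*(n:ℝ)-5)^4 := by
    unfold h; ring
  rw [key]
  have ha : (5:ℝ) ≤ 2*(n:ℝ)-5 := by linarith
  generalize 2*(n:ℝ)-5 = a at ha ⊢
  have ha5 : (0:ℝ) ≤ a - 5 := by linarith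
  have hc4p : (0:ℝ) < 3*x^7 - 3/2*x^8 := by nlinarith [pow_pos hx0 7]
  have hc3p : (0:ℝ) < 43*x^5 - 63/2*x^6 + 12*x^7 - 7/2*x^8 := by
    nlinarith [mul_pos (pow_pos hx0 5) (lq3 x hx1 hx2)]
  have hS2 := lS2 x hx1 hx2
  have hT := lT x hx1 hx2
  have hP := lP x hx1 hx2
  have h2 : (0:ℝ) ≤ a^2 * ((43*x^5 - 63/2*x^6 + 12*x^7 - 7/2*x^8)*(a-5)
      + (3*x^7 - 3/2*x^8)*((a-5)*(a+5))) :=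
    mul_nonneg (sq_nonneg a)
      (add_nonneg (mul_nonneg hc3p.le ha5)
        (mul_nonneg hc4p.le (mul_nonneg ha5 (by linarith : (0:ℝ) ≤ a + 5))))
  have h1 : (0:ℝ) ≤ (a - 5) * ((256*x - 608*x^2 + 768*x^3 - 360*x^4)
      + (192*x^3 - 222*x^4 + 387*x^5 - 221*x^6 + 135*x^7 - 55*x^8)*a) := by
    apply mul_nonneg ha5
    nlinarith [mul_nonneg hS2.le ha5]
  have h3 : (0:ℝ) ≤ (192*x^3 - 222*x^4 + 387*x^5 - 221*x^6 + 135*x^7 - 55*x^8)*(a-5) :=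
    mul_nonneg hS2.le ha5
  have final :
      (-512 + 1024*x - 640*x^2)
      + (256*x - 608*x^2 + 768*x^3 - 360*x^4) * a
      + (192*x^3 - 222*x^4 + 172*x^5 - 127/2*x^6) * a^2
      + (43*x^5 - 63/2*x^6 + 12*x^7 - 7/2*x^8) * a^3
      + (3*x^7 - 3/2*x^8) * a^4
      = (-512 + 2304*x - 3680*x^2 + 8640*x^3 - 7350*x^4 + 9675*x^5 - 5525*x^6
          + 3375*x^7 - 1375*x^8)
        + (a - 5) * ((256*x - 608*x^2 + 768*x^3 - 360*x^4)
            + (192*x^3 - 222*x^4 + 387*x^5 - 221*x^6 + 135*x^7 - 55*x^8)*a)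
        + 5*((192*x^3 - 222*x^4 + 387*x^5 - 221*x^6 + 135*x^7 - 55*x^8)*(a-5))
        + a^2 * ((43*x^5 - 63/2*x^6 + 12*x^7 - 7/2*x^8)*(a-5)
            + (3*x^7 - 3/2*x^8)*((a-5)*(a+5))) := by ring
  linarith [h1, h2, h3, hP, final.ge, final.le]
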